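/- Consider ℝ² split into two one-dimensional blocks and L = (1,1). The three triples (x₁,g₁,f₁) = ((−1,0),(−1,0),1/2), (x₂,g₂,f₂) = ((0,0),(0,−1),0), (x₃,g₃,f₃) = ((1,0),(1,0),1/2) satisfy, for all i, j ∈ {1,2,3} and both blocks ℓ ∈ {1,2}, the interpolation inequalities f_i ≥ f_j + ⟨g_j, x_i − x_j⟩ + (1/(2L_ℓ))‖g_i^{(ℓ)} − g_j^{(ℓ)}‖²; nevertheless there exists no function f ∈ F^coord_{0,(1,1)}(ℝ²) such that f(x_i) = f_i and ∇f(x_i) = g_i for i = 1, 2, 3. Hence these interpolation conditions are not sufficient for sets of cardinality three. -/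

import Mathlib

open RealInnerProductSpace

noncomputable section

/-- Membership in the class `F^coord_{0,(1,1)}(ℝ²)`: convex, differentiable, and each of the two
partial derivatives is `1`-Lipschitz along its own coordinate. -/
def IsCoordSmooth2 (f : EuclideanSpace ℝ (Fin 2) → ℝ) : Prop :=
  ConvexOn ℝ Set.univ f ∧ Differentiable ℝ f ∧
    ∀ (ℓ : Fin 2) (x : EuclideanSpace ℝ (Fin 2)) (h : ℝ),
      |gradient f (x + h • EuclideanSpace.single ℓ 1) ℓ - gradient f x ℓ| ≤ |h|

/-- The three points `x₁ = (-1,0)`, `x₂ = (0,0)`, `x₃ = (1,0)`. -/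
def X : Fin 3 → EuclideanSpace ℝ (Fin 2) :=
  ![(WithLp.equiv 2 (Fin 2 → ℝ)).symm ![-1, 0],
    (WithLp.equiv 2 (Fin 2 → ℝ)).symm ![0, 0],
    (WithLp.equiv 2 (Fin 2 → ℝ)).symm ![1, 0]]

/-- The three gradients `g₁ = (-1,0)`, `g₂ = (0,-1)`, `g₃ = (1,0)`. -/
def G : Fin 3 → EuclideanSpace ℝ (Fin 2) :=
  ![(WithLp.equiv 2 (Fin 2 → ℝ)).symm ![-1, 0],
    (WithLp.equiv 2 (Fin 2 → ℝ)).symm ![0, -1],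
    (WithLp.equiv 2 (Fin 2 → ℝ)).symm ![1, 0]]

/-- The three function values `f₁ = 1/2`, `f₂ = 0`, `f₃ = 1/2`. -/
def F : Fin 3 → ℝ := ![1/2, 0, 1/2]

/-- The tangent-line inequality for differentiable convex functions. -/
private lemma tangent_line {E : Type*} [NormedAddCommGroup E] [InnerProductSpace ℝ E]
    [CompleteSpace E] {f : E → ℝ}
    (hconv : ConvexOn ℝ Set.univ f) (hdiff : Differentiable ℝ f) (x y : E) :
    f x + ⟪gradient f x, y - x⟫ ≤ f y := by
  set φ : ℝ → ℝ := fun t => f (x + t • (y - x)) with hφ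
  have hc : ∀ t : ℝ, HasDerivAt (fun s : ℝ => x + s • (y - x)) (y - x) t := by
    intro t
    convert (hasDerivAt_const t x).add ((hasDerivAt_id t).smul_const (y - x)) using 1
    · rfl
    · simp
  have hder : HasDerivAt φ ⟪gradient f x, y - x⟫ 0 := by
    have h1 : HasFDerivAt f ((InnerProductSpace.toDualMap ℝ E) (gradient f x)) x :=
      (hdiff x).hasGradientAt.hasFDerivAt
    have h1' : HasFDerivAt f ((InnerProductSpace.toDualMap ℝ E) (gradient f x))
        (x + (0 : ℝ) • (y - x)) := by simpa using h1
    have := h1'.comp_hasDerivAt (0 : ℝ) (hc 0)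
    have h2 := (hdiff (x + (0 : ℝ) • (y - x))).hasFDerivAt.comp_hasDerivAt (0 : ℝ) (hc 0)
    simpa [hφ, gradient, Function.comp_def] using h2
  have hφconv : ConvexOn ℝ Set.univ φ := by
    have := hconv.comp_affineMap (AffineMap.lineMap x y : ℝ →ᵃ[ℝ] E)
    simp only [Set.preimage_univ] at this
    rw [show φ = f ∘ AffineMap.lineMap x y from ?_]
    · exact this
    funext t
    simp [hφ, AffineMap.lineMap_apply, add_comm]
  have h := hφconv.le_slope_of_hasDerivAt (Set.mem_univ (0 : ℝ)) (Set.mem_univ (1 : ℝ))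
    one_pos hder
  rw [slope_def_field] at h
  have h0 : φ 0 = f x := by simp [hφ]
  have h1 : φ 1 = f y := by simp [hφ]
  rw [h0, h1] at h
  have : ⟪gradient f x, y - x⟫ ≤ f y - f x := by simpa using h
  linarith

private def pt (a b : ℝ) : EuclideanSpace ℝ (Fin 2) :=
  (WithLp.equiv 2 (Fin 2 → ℝ)).symm ![a, b]

private lemma pt_apply_zero (a b : ℝ) : pt a b 0 = a := rfl
private lemma pt_apply_one (a b : ℝ) : pt a b 1 = b := rfl

private lemma pt_add_zero (a b h : ℝ) :
    pt a b + h • EuclideanSpace.single (0 : Fin 2) 1 = pt (a + h) b := by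
  ext i
  fin_cases i <;>
    simp [pt, WithLp.equiv_symm_apply, PiLp.toLp_apply, EuclideanSpace.single_apply]

private lemma pt_add_one (a b h : ℝ) :
    pt a b + h • EuclideanSpace.single (1 : Fin 2) 1 = pt a (b + h) := by
  ext i
  fin_cases i <;>
    simp [pt, WithLp.equiv_symm_apply, PiLp.toLp_apply, EuclideanSpace.single_apply]

private lemma pt_sub (a b c d : ℝ) : pt a b - pt c d = pt (a - c) (b - d) := by
  ext i
  fin_cases i <;> simp [pt, WithLp.equiv_symm_apply, PiLp.toLp_apply]

private lemma inner_pt (u : EuclideanSpace ℝ (Fin 2)) (c d : ℝ) :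
    ⟪u, pt c d⟫ = u 0 * c + u 1 * d := by
  simp [PiLp.inner_apply, RCLike.inner_apply, Fin.sum_univ_two, pt,
    WithLp.equiv_symm_apply, PiLp.toLp_apply]
  ring

theorem interpolation_conditions_not_sufficient_three_points :
    (∀ (i j : Fin 3) (ℓ : Fin 2),
      F i ≥ F j + ⟪G j, X i - X j⟫ + 1 / 2 * |G i ℓ - G j ℓ| ^ 2) ∧
    ¬ ∃ f : EuclideanSpace ℝ (Fin 2) → ℝ, IsCoordSmooth2 f ∧
        ∀ i : Fin 3, f (X i) = F i ∧ gradient f (X i) = G i := by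
  constructor
  · intro i j ℓ
    fin_cases i <;> fin_cases j <;> fin_cases ℓ <;>
      norm_num [F, X, G, PiLp.inner_apply, RCLike.inner_apply, Fin.sum_univ_two,
        WithLp.equiv_symm_apply, PiLp.toLp_apply, PiLp.sub_apply, abs_of_nonneg, abs_of_nonpos]
  · rintro ⟨f, ⟨hconv, hdiff, hLip⟩, hint⟩
    have hf0 : f (pt (-1) 0) = 1 / 2 := (hint 0).1
    have hg0 : gradient f (pt (-1) 0) = pt (-1) 0 := (hint 0).2
    have hf1 : f (pt 0 0) = 0 := (hint 1).1
    have hg1 : gradient f (pt 0 0) = pt 0 (-1) := (hint 1).2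
    have hf2 : f (pt 1 0) = 1 / 2 := (hint 2).1
    have hg2 : gradient f (pt 1 0) = pt 1 0 := (hint 2).2
    -- A : tangent at (1,0) applied to (1, 1/2)
    have A := tangent_line hconv hdiff (pt 1 0) (pt 1 (1/2))
    rw [hf2, hg2, pt_sub, inner_pt, pt_apply_zero, pt_apply_one] at A
    norm_num at A
    -- B : tangent at (-1,0) applied to (-1, 1/2)
    have B := tangent_line hconv hdiff (pt (-1) 0) (pt (-1) (1/2))
    rw [hf0, hg0, pt_sub, inner_pt, pt_apply_zero, pt_apply_one] at B
    norm_num at B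
    -- C : coordinate-2 Lipschitz at (0,0) with step 1/2
    have C := hLip 1 (pt 0 0) (1/2)
    rw [pt_add_one, hg1, pt_apply_one] at C
    norm_num [abs_le] at C
    -- D : tangent at (0,1/2) applied to (0,0)
    have D := tangent_line hconv hdiff (pt 0 (1/2)) (pt 0 0)
    rw [hf1, pt_sub, inner_pt] at D
    norm_num at D
    -- Rightward chain: tangent steps and coordinate-1 Lipschitz with step 1/3
    have E0 := tangent_line hconv hdiff (pt (1/3) (1/2)) (pt 0 (1/2))
    rw [pt_sub, inner_pt] at E0; norm_num at E0
    have E1 := tangent_line hconv hdiff (pt (2/3) (1/2)) (pt (1/3) (1/2))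
    rw [pt_sub, inner_pt] at E1; norm_num at E1
    have E2 := tangent_line hconv hdiff (pt 1 (1/2)) (pt (2/3) (1/2))
    rw [pt_sub, inner_pt] at E2; norm_num at E2
    have F0 := hLip 0 (pt 0 (1/2)) (1/3)
    rw [pt_add_zero] at F0; norm_num [abs_le] at F0
    have F1 := hLip 0 (pt (1/3) (1/2)) (1/3)
    rw [pt_add_zero] at F1; norm_num [abs_le] at F1
    have F2 := hLip 0 (pt (2/3) (1/2)) (1/3)
    rw [pt_add_zero] at F2; norm_num [abs_le] at F2
    -- Leftward chain
    have E0' := tangent_line hconv hdiff (pt (-1/3) (1/2)) (pt 0 (1/2))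
    rw [pt_sub, inner_pt] at E0'; norm_num at E0'
    have E1' := tangent_line hconv hdiff (pt (-2/3) (1/2)) (pt (-1/3) (1/2))
    rw [pt_sub, inner_pt] at E1'; norm_num at E1'
    have E2' := tangent_line hconv hdiff (pt (-1) (1/2)) (pt (-2/3) (1/2))
    rw [pt_sub, inner_pt] at E2'; norm_num at E2'
    have F0' := hLip 0 (pt (-1/3) (1/2)) (1/3)
    rw [pt_add_zero] at F0'; norm_num [abs_le] at F0'
    have F1' := hLip 0 (pt (-2/3) (1/2)) (1/3)
    rw [pt_add_zero] at F1'; norm_num [abs_le] at F1'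
    have F2' := hLip 0 (pt (-1) (1/2)) (1/3)
    rw [pt_add_zero] at F2'; norm_num [abs_le] at F2'
    have habs3 : |(1/3 : ℝ)| = 1/3 := abs_of_nonneg (by norm_num)
    have habs2 : |(1/2 : ℝ)| = 1/2 := abs_of_nonneg (by norm_num)
    linarith [habs3, habs2, A, B, C.1, C.2, D, E0, E1, E2, F0.1, F0.2, F1.1, F1.2, F2.1, F2.2,
      E0', E1', E2', F0'.1, F0'.2, F1'.1, F1'.2, F2'.1, F2'.2]
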